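/- For every integer Δ ≥ 3 there exist a finite simple graph G of maximum degree at most Δ and a MinGreedy execution on G whose output matching M satisfies |M| = Δ−1, while G contains a matching of size 2Δ−3; in particular, |M| ≤ ((Δ−1)/(2Δ−3))·ν(G), so the worst-case approximation guarantee (Δ−1)/(2Δ−3) for MinGreedy on graphs of maximum degree Δ is tight. -/

import Mathlib

namespace MinGreedy

noncomputable section

open SimpleGraph

/-- The degree of a vertex `x` in the graph `H`. -/
def deg {V : Type} (H : SimpleGraph V) (x : V) : ℕ :=
  (H.neighborSet x).ncard

/-- `M` is a matching of `G`, given as a set of pairwise disjoint edges of `G`. -/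
def IsMatchingSet {V : Type} (G : SimpleGraph V) (M : Set (Sym2 V)) : Prop :=
  M ⊆ G.edgeSet ∧ ∀ e ∈ M, ∀ f ∈ M, e ≠ f → ∀ x : V, x ∈ e → x ∉ f

/-- `M` is a maximum matching of `G`. -/
def IsMaxMatchingSet {V : Type} (G : SimpleGraph V) (M : Set (Sym2 V)) : Prop :=
  IsMatchingSet G M ∧ ∀ N : Set (Sym2 V), IsMatchingSet G N → N.ncard ≤ M.ncard

/-- `ν G`, the maximum size of a matching of `G`. -/
def nu {V : Type} (G : SimpleGraph V) : ℕ :=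
  sSup {n | ∃ M : Set (Sym2 V), IsMatchingSet G M ∧ M.ncard = n}

/-- `G` has maximum degree at most `Δ`. -/
def maxDegLE {V : Type} (G : SimpleGraph V) (Δ : ℕ) : Prop :=
  ∀ x : V, deg G x ≤ Δ

/-- An execution of a greedy matching algorithm on `G`: in step `i` (`0 ≤ i < k`) the
edge `{sel i, oth i}` of `Gs i` is picked with selected vertex `sel i`, and `Gs (i+1)`
is obtained from `Gs i` by deleting all edges incident with `sel i` or `oth i`;
at the end `Gs k` has no edges. -/
structure GreedyExec (V : Type) (G : SimpleGraph V) where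
  k : ℕ
  Gs : ℕ → SimpleGraph V
  sel : ℕ → V
  oth : ℕ → V
  init : Gs 0 = G
  adj : ∀ i < k, (Gs i).Adj (sel i) (oth i)
  step : ∀ i < k, Gs (i + 1) =
    SimpleGraph.fromEdgeSet {e | e ∈ (Gs i).edgeSet ∧ sel i ∉ e ∧ oth i ∉ e}
  final : (Gs k).edgeSet = ∅

/-- The output matching `M = {e_1, …, e_k}` of an execution. -/
def GreedyExec.M {V : Type} {G : SimpleGraph V} (E : GreedyExec V G) : Set (Sym2 V) :=
  {e | ∃ i < E.k, e = s(E.sel i, E.oth i)}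

/-- The execution is a MinGreedy execution: in each step the selected vertex has
minimum positive degree in the current graph. -/
def GreedyExec.IsMinGreedy {V : Type} {G : SimpleGraph V} (E : GreedyExec V G) : Prop :=
  ∀ i < E.k, ∀ x : V, 0 < deg (E.Gs i) x → deg (E.Gs i) (E.sel i) ≤ deg (E.Gs i) x

/-- The execution is a 1-2-MinGreedy execution: whenever the current graph has a vertex of
degree 1 or 2, the selected vertex has minimum positive degree in the current graph. -/
def GreedyExec.Is12MinGreedy {V : Type} {G : SimpleGraph V} (E : GreedyExec V G) : Prop :=
  ∀ i < E.k, (∃ x : V, deg (E.Gs i) x = 1 ∨ deg (E.Gs i) x = 2) →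
    ∀ x : V, 0 < deg (E.Gs i) x → deg (E.Gs i) (E.sel i) ≤ deg (E.Gs i) x

/-- `p 0, p 1, …, p (2m+1)` is an `M`-augmenting path: an `M`-alternating path whose
first and last edges lie in `Mopt` and whose two endpoints `p 0` and `p (2m+1)` are
not covered by `M`; it has `m` edges of `M` and `m+1` edges of `Mopt`. -/
def IsAugPath {V : Type} (M Mopt : Set (Sym2 V)) (m : ℕ) (p : ℕ → V) : Prop :=
  (∀ i ≤ 2 * m + 1, ∀ j ≤ 2 * m + 1, p i = p j → i = j) ∧
  (∀ j ≤ 2 * m, (j % 2 = 0 → s(p j, p (j + 1)) ∈ Mopt) ∧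
                (j % 2 = 1 → s(p j, p (j + 1)) ∈ M)) ∧
  (∀ e ∈ M, p 0 ∉ e ∧ p (2 * m + 1) ∉ e)

/-- The vertex set of the path `p 0, …, p (2m+1)`. -/
def pathSupp {V : Type} (m : ℕ) (p : ℕ → V) : Set V := p '' {j | j ≤ 2 * m + 1}

/-- `w` is an endpoint of an `M`-augmenting path of the graph `(V, M ∪ Mopt)`. -/
def IsPathEndpoint {V : Type} (M Mopt : Set (Sym2 V)) (w : V) : Prop :=
  ∃ m p, IsAugPath M Mopt m p ∧ (w = p 0 ∨ w = p (2 * m + 1))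

/-- `S` is the vertex set of a singleton component: a single edge of `M ∩ Mopt`. -/
def IsSingletonComp {V : Type} (M Mopt : Set (Sym2 V)) (S : Set V) : Prop :=
  ∃ x y : V, x ≠ y ∧ s(x, y) ∈ M ∧ s(x, y) ∈ Mopt ∧ S = ({x, y} : Set V)

/-- `Mopt` is a maximum matching of `G` in normal form with respect to `M`: every
(nontrivial) connected component of the graph `(V, M ∪ Mopt)` is a singleton
(a single edge of `M ∩ Mopt`) or an `M`-augmenting path. -/
def NormalForm {V : Type} (G : SimpleGraph V) (M Mopt : Set (Sym2 V)) : Prop :=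
  IsMaxMatchingSet G Mopt ∧
  ∀ C : (SimpleGraph.fromEdgeSet (M ∪ Mopt)).ConnectedComponent,
    2 ≤ C.supp.ncard →
    IsSingletonComp M Mopt C.supp ∨
    ∃ m p, IsAugPath M Mopt m p ∧ C.supp = pathSupp m p

/-- `{x, y}` is an edge of `F = E ∖ (M ∪ Mopt)`. -/
def FEdge {V : Type} (G : SimpleGraph V) (M Mopt : Set (Sym2 V)) (x y : V) : Prop :=
  s(x, y) ∈ G.edgeSet ∧ s(x, y) ∉ M ∧ s(x, y) ∉ Mopt

/-- The number of `F`-edges incident with `x`. -/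
def Fdeg {V : Type} (G : SimpleGraph V) (M Mopt : Set (Sym2 V)) (x : V) : ℕ :=
  {e : Sym2 V | e ∈ G.edgeSet ∧ e ∉ M ∧ e ∉ Mopt ∧ x ∈ e}.ncard

/-- `x` is matched at step `i` of the execution, i.e. `x ∈ e_i`. -/
def matchedAt {V : Type} {G : SimpleGraph V} (E : GreedyExec V G) (i : ℕ) (x : V) : Prop :=
  i < E.k ∧ (x = E.sel i ∨ x = E.oth i)

/-- The `F`-edge `{v, w}` is a transfer from `v` to `w` arising at step `i`: `w` is an
endpoint of an `M`-augmenting path, `v` is matched at step `i` and the degree of `w`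
in the graph after step `i` is at most 1. -/
def transferAt {V : Type} {G : SimpleGraph V} (E : GreedyExec V G)
    (M Mopt : Set (Sym2 V)) (i : ℕ) (v w : V) : Prop :=
  FEdge G M Mopt v w ∧ IsPathEndpoint M Mopt w ∧ matchedAt E i v ∧
  deg (E.Gs (i + 1)) w ≤ 1

/-- The edge `{v, w}` is a transfer from `v` to `w`. -/
def IsTransfer {V : Type} {G : SimpleGraph V} (E : GreedyExec V G)
    (M Mopt : Set (Sym2 V)) (v w : V) : Prop :=
  ∃ i, transferAt E M Mopt i v w

/-- `(v, w)` is an uncanceled transfer arising at step `i`: it is a transfer arising at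
step `i` and it is not the case that (`w` has degree exactly 1 before step `i` with its
unique incident edge being `{v, w}`, and `w` is the target of at least two uncanceled
transfers arising at steps before `i`). -/
def uncanceledAt {V : Type} {G : SimpleGraph V} (E : GreedyExec V G)
    (M Mopt : Set (Sym2 V)) (i : ℕ) : V → V → Prop :=
  Nat.strongRecOn (motive := fun _ => V → V → Prop) i (fun i ih v w =>
    transferAt E M Mopt i v w ∧
    ¬(deg (E.Gs i) w = 1 ∧ (E.Gs i).Adj v w ∧
      ∃ (j₁ : ℕ) (h₁ : j₁ < i) (v₁ : V) (j₂ : ℕ) (h₂ : j₂ < i) (v₂ : V),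
        ih j₁ h₁ v₁ w ∧ ih j₂ h₂ v₂ w ∧ (j₁, v₁) ≠ (j₂, v₂)))

/-- `(v, w)` is an uncanceled transfer. -/
def IsUncanceledTransfer {V : Type} {G : SimpleGraph V} (E : GreedyExec V G)
    (M Mopt : Set (Sym2 V)) (v w : V) : Prop :=
  ∃ i, uncanceledAt E M Mopt i v w

/-- `(v, w)` is a canceled transfer. -/
def IsCanceledTransfer {V : Type} {G : SimpleGraph V} (E : GreedyExec V G)
    (M Mopt : Set (Sym2 V)) (v w : V) : Prop :=
  IsTransfer E M Mopt v w ∧ ¬IsUncanceledTransfer E M Mopt v w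

/-- `d_X`: the number of transfers whose source lies in the vertex set `X`. -/
def debits {V : Type} {G : SimpleGraph V} (E : GreedyExec V G)
    (M Mopt : Set (Sym2 V)) (X : Set V) : ℕ :=
  {q : V × V | IsTransfer E M Mopt q.1 q.2 ∧ q.1 ∈ X}.ncard

/-- `c_X`: the number of transfers whose target lies in the vertex set `X`. -/
def credits {V : Type} {G : SimpleGraph V} (E : GreedyExec V G)
    (M Mopt : Set (Sym2 V)) (X : Set V) : ℕ :=
  {q : V × V | IsTransfer E M Mopt q.1 q.2 ∧ q.2 ∈ X}.ncard

/-- `i` is the creation step of the component with vertex set `X`: the step in which the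
first edge of `M` lying in `X` is picked. -/
def creationStep {V : Type} {G : SimpleGraph V} (E : GreedyExec V G)
    (X : Set V) (i : ℕ) : Prop :=
  i < E.k ∧ E.sel i ∈ X ∧ E.oth i ∈ X ∧ ∀ j < i, ¬(E.sel j ∈ X ∧ E.oth j ∈ X)

/-- A degree-1 endpoint exists after the creation step `i`: some transfer with source
`sel i` or `oth i` targets an endpoint `w` of degree exactly 1 after step `i`. -/
def Deg1EndpointAfter {V : Type} {G : SimpleGraph V} (E : GreedyExec V G)
    (M Mopt : Set (Sym2 V)) (i : ℕ) : Prop :=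
  ∃ v w : V, (v = E.sel i ∨ v = E.oth i) ∧ transferAt E M Mopt i v w ∧
    deg (E.Gs (i + 1)) w = 1
namespace Tight
open Sum

/-- Vertex type: `n` layers of 4 vertices `u,t,a,b` plus a 6-vertex gadget `p0..p5`. -/
abbrev V (n : ℕ) : Type := (Fin n × Fin 4) ⊕ (Fin 6)

/-- Base edges (one orientation). -/
def base (n : ℕ) (x y : V n) : Prop :=
  (∃ i : Fin n, x = inl (i,0) ∧ y = inl (i,1)) ∨
  (∃ i : Fin n, x = inl (i,0) ∧ y = inl (i,2)) ∨
  (∃ i : Fin n, x = inl (i,2) ∧ y = inl (i,1)) ∨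
  (∃ i : Fin n, x = inl (i,1) ∧ y = inl (i,3)) ∨
  (∃ i : Fin n, x = inl (i,3) ∧ y = inr 1) ∨
  (∃ i : Fin n, x = inl (i,3) ∧ y = inr 4) ∨
  (x = inr 0 ∧ y = inr 1) ∨
  (x = inr 1 ∧ y = inr 2) ∨
  (x = inr 2 ∧ y = inr 3) ∨
  (x = inr 3 ∧ y = inr 4) ∨
  (x = inr 4 ∧ y = inr 5) ∨
  (x = inr 0 ∧ y = inr 4) ∨
  (x = inr 1 ∧ y = inr 5)

def adj0 (n : ℕ) (x y : V n) : Prop := base n x y ∨ base n y x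

lemma base_ne {n : ℕ} {x y : V n} (h : base n x y) : x ≠ y := by
  rcases h with ⟨i,rfl,rfl⟩|⟨i,rfl,rfl⟩|⟨i,rfl,rfl⟩|⟨i,rfl,rfl⟩|⟨i,rfl,rfl⟩|⟨i,rfl,rfl⟩|
    ⟨rfl,rfl⟩|⟨rfl,rfl⟩|⟨rfl,rfl⟩|⟨rfl,rfl⟩|⟨rfl,rfl⟩|⟨rfl,rfl⟩|⟨rfl,rfl⟩ <;> simp

lemma adj0_ne {n : ℕ} {x y : V n} (h : adj0 n x y) : x ≠ y := by
  rcases h with h|h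
  · exact base_ne h
  · exact (base_ne h).symm

lemma adj0_symm {n : ℕ} {x y : V n} (h : adj0 n x y) : adj0 n y x := h.symm

/-- selected vertex of step `m`. -/
def selF (n m : ℕ) : V n := if h : m < n then inl (⟨m,h⟩, 0) else if m = n then inr 2 else inr 3
/-- other endpoint of step `m`. -/
def othF (n m : ℕ) : V n := if h : m < n then inl (⟨m,h⟩, 1) else if m = n then inr 1 else inr 4

/-- `v` has been removed (matched) before step `m`. -/
def rem (n m : ℕ) (v : V n) : Prop := ∃ j, j < m ∧ (v = selF n j ∨ v = othF n j)

lemma rem_succ (n m : ℕ) (v : V n) :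
    rem n (m+1) v ↔ rem n m v ∨ v = selF n m ∨ v = othF n m := by
  constructor
  · rintro ⟨j, hj, h⟩
    rcases Nat.lt_succ_iff_lt_or_eq.1 hj with hj'|rfl
    · exact Or.inl ⟨j, hj', h⟩
    · exact Or.inr h
  · rintro (⟨j, hj, h⟩|h)
    · exact ⟨j, Nat.lt_succ_of_lt hj, h⟩
    · exact ⟨m, Nat.lt_succ_self m, h⟩

lemma rem_inl0 {n m : ℕ} (i : Fin n) : rem n m (inl (i,0)) ↔ (i:ℕ) < m := by
  constructor
  · rintro ⟨j, hj, h|h⟩ <;> by_cases hjn : j < n <;>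
      simp [selF, othF, hjn, Fin.ext_iff] at h <;> 
      first
      | (obtain ⟨h1, h2⟩ := h; omega)
      | (split at h <;> simp_all)
  · intro h
    exact ⟨i, h, Or.inl (by simp [selF, i.isLt])⟩

lemma rem_inl1 {n m : ℕ} (i : Fin n) : rem n m (inl (i,1)) ↔ (i:ℕ) < m := by
  constructor
  · rintro ⟨j, hj, h|h⟩ <;> by_cases hjn : j < n <;>
      simp [selF, othF, hjn, Fin.ext_iff] at h <;>
      first
      | (obtain ⟨h1, h2⟩ := h; omega)
      | (split at h <;> simp_all)
  · intro h
    exact ⟨i, h, Or.inr (by simp [othF, i.isLt])⟩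

lemma rem_inl2 {n m : ℕ} (i : Fin n) : ¬ rem n m (inl (i,2)) := by
  rintro ⟨j, hj, h|h⟩ <;> by_cases hjn : j < n <;>
    simp [selF, othF, hjn, Prod.ext_iff] at h <;> split at h <;> simp_all

lemma rem_inl3 {n m : ℕ} (i : Fin n) : ¬ rem n m (inl (i,3)) := by
  rintro ⟨j, hj, h|h⟩ <;> by_cases hjn : j < n <;>
    simp [selF, othF, hjn, Prod.ext_iff] at h <;> split at h <;> simp_all

lemma rem_inr0 {n m : ℕ} : ¬ rem n m (inr 0 : V n) := by
  rintro ⟨j, hj, h|h⟩ <;> by_cases hjn : j < n <;>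
    simp [selF, othF, hjn] at h <;> split at h <;> simp_all

lemma rem_inr5 {n m : ℕ} : ¬ rem n m (inr 5 : V n) := by
  rintro ⟨j, hj, h|h⟩ <;> by_cases hjn : j < n <;>
    simp [selF, othF, hjn] at h <;> split at h <;> simp_all

lemma rem_inr1 {n m : ℕ} : rem n m (inr 1 : V n) ↔ n < m := by
  constructor
  · rintro ⟨j, hj, h|h⟩ <;> by_cases hjn : j < n <;>
      simp [selF, othF, hjn] at h <;> simp_all <;> omega
  · intro h
    exact ⟨n, h, Or.inr (by simp [othF])⟩

lemma rem_inr2 {n m : ℕ} : rem n m (inr 2 : V n) ↔ n < m := by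
  constructor
  · rintro ⟨j, hj, h|h⟩ <;> by_cases hjn : j < n <;>
      simp [selF, othF, hjn] at h <;> simp_all <;> omega
  · intro h
    exact ⟨n, h, Or.inl (by simp [selF])⟩

lemma rem_inr3 {n m : ℕ} : rem n m (inr 3 : V n) ↔ n + 1 < m := by
  constructor
  · rintro ⟨j, hj, h|h⟩ <;> by_cases hjn : j < n <;>
      simp [selF, othF, hjn, eq_ite_iff] at h <;> omega
  · intro h
    refine ⟨n+1, h, Or.inl ?_⟩
    simp [selF]

lemma rem_inr4 {n m : ℕ} : rem n m (inr 4 : V n) ↔ n + 1 < m := by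
  constructor
  · rintro ⟨j, hj, h|h⟩ <;> by_cases hjn : j < n <;>
      simp [selF, othF, hjn, eq_ite_iff] at h <;> omega
  · intro h
    refine ⟨n+1, h, Or.inr ?_⟩
    simp [othF]

/-- The graph at time `m`. -/
def Gm (n m : ℕ) : SimpleGraph (V n) where
  Adj x y := adj0 n x y ∧ ¬ rem n m x ∧ ¬ rem n m y
  symm := by constructor; rintro x y ⟨h, hx, hy⟩; exact ⟨adj0_symm h, hy, hx⟩
  loopless := by constructor; rintro x ⟨h, -, -⟩; exact adj0_ne h rfl

lemma Gm_step (n m : ℕ) :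
    Gm n (m+1) = SimpleGraph.fromEdgeSet
      {e | e ∈ (Gm n m).edgeSet ∧ selF n m ∉ e ∧ othF n m ∉ e} := by
  ext x y
  simp only [fromEdgeSet_adj, Set.mem_setOf_eq, mem_edgeSet, Sym2.mem_iff, Gm, rem_succ]
  constructor
  · rintro ⟨h, hx, hy⟩
    have := adj0_ne h
    tauto
  · rintro ⟨⟨⟨h, hx, hy⟩, hs, ho⟩, hne⟩
    tauto

lemma Gm_final (n : ℕ) : (Gm n (n+2)).edgeSet = ∅ := by
  ext e
  refine e.ind (fun x y => ?_)
  simp only [mem_edgeSet, Set.mem_empty_iff_false, iff_false]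
  rintro ⟨h|h, hx, hy⟩ <;>
  · rcases h with ⟨i,rfl,rfl⟩|⟨i,rfl,rfl⟩|⟨i,rfl,rfl⟩|⟨i,rfl,rfl⟩|⟨i,rfl,rfl⟩|⟨i,rfl,rfl⟩|
      ⟨rfl,rfl⟩|⟨rfl,rfl⟩|⟨rfl,rfl⟩|⟨rfl,rfl⟩|⟨rfl,rfl⟩|⟨rfl,rfl⟩|⟨rfl,rfl⟩ <;>
    first
    | exact hx ((rem_inl0 i).2 (by omega))
    | exact hy ((rem_inl0 i).2 (by omega))
    | exact hx ((rem_inl1 i).2 (by omega))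
    | exact hy ((rem_inl1 i).2 (by omega))
    | exact hx (rem_inr1.2 (by omega))
    | exact hy (rem_inr1.2 (by omega))
    | exact hx (rem_inr2.2 (by omega))
    | exact hy (rem_inr2.2 (by omega))
    | exact hx (rem_inr3.2 (by omega))
    | exact hy (rem_inr3.2 (by omega))
    | exact hx (rem_inr4.2 (by omega))
    | exact hy (rem_inr4.2 (by omega))

lemma Gm_adj (n m : ℕ) (hm : m < n + 2) : (Gm n m).Adj (selF n m) (othF n m) := by
  by_cases h : m < n
  · refine ⟨Or.inl (Or.inl ⟨⟨m,h⟩, by simp [selF, h], by simp [othF, h]⟩), ?_, ?_⟩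
    · simp [selF, h, rem_inl0]
    · simp [othF, h, rem_inl1]
  · by_cases h2 : m = n
    · subst h2
      refine ⟨Or.inr ?_, ?_, ?_⟩
      · simp only [selF, othF]
        simp [base]
      · simp [selF, rem_inr2]
      · simp [othF, rem_inr1]
    · have h3 : m = n + 1 := by omega
      subst h3
      refine ⟨Or.inl ?_, ?_, ?_⟩
      · simp only [selF, othF]
        have : ¬ (n+1 < n) := by omega
        simp [base, this]
      · simp [selF, rem_inr3, show ¬ (n+1<n) by omega]
      · simp [othF, rem_inr4, show ¬ (n+1<n) by omega]

lemma two_le_deg {n : ℕ} {H : SimpleGraph (V n)} {x y z : V n}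
    (hy : H.Adj x y) (hz : H.Adj x z) (hne : y ≠ z) : 2 ≤ deg H x := by
  have hsub : ({y, z} : Set (V n)) ⊆ H.neighborSet x := by
    rintro w (rfl|rfl)
    · exact hy
    · exact hz
  calc 2 = ({y, z} : Set (V n)).ncard := (Set.ncard_pair hne).symm
    _ ≤ _ := Set.ncard_le_ncard hsub (Set.toFinite _)

lemma deg_zero_of_rem {n m : ℕ} {x : V n} (h : rem n m x) : deg (Gm n m) x = 0 := by
  have he : (Gm n m).neighborSet x = ∅ := by
    ext y
    simp only [mem_neighborSet, Set.mem_empty_iff_false, iff_false]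
    rintro ⟨-, hx, -⟩
    exact hx h
  simp [deg, he]

lemma deg_a_dead {n m : ℕ} (i : Fin n) (h : (i:ℕ) < m) : deg (Gm n m) (inl (i,2)) = 0 := by
  have he : (Gm n m).neighborSet (inl (i,2)) = ∅ := by
    ext y
    simp only [mem_neighborSet, Set.mem_empty_iff_false, iff_false]
    rintro ⟨hadj|hadj, hx, hy⟩ <;>
      rcases hadj with ⟨i',h1,h2⟩|⟨i',h1,h2⟩|⟨i',h1,h2⟩|⟨i',h1,h2⟩|⟨i',h1,h2⟩|⟨i',h1,h2⟩|
        ⟨h1,h2⟩|⟨h1,h2⟩|⟨h1,h2⟩|⟨h1,h2⟩|⟨h1,h2⟩|⟨h1,h2⟩|⟨h1,h2⟩ <;>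
      simp_all [Prod.ext_iff, rem_inl0, rem_inl1] <;> omega
  simp [deg, he]

section adjacencies
variable {n m : ℕ}

lemma gadj_ut {i : Fin n} (h : m ≤ (i:ℕ)) : (Gm n m).Adj (inl (i,0)) (inl (i,1)) :=
  ⟨Or.inl (Or.inl ⟨i, rfl, rfl⟩), by simp only [rem_inl0]; omega, by simp only [rem_inl1]; omega⟩

lemma gadj_ua {i : Fin n} (h : m ≤ (i:ℕ)) : (Gm n m).Adj (inl (i,0)) (inl (i,2)) :=
  ⟨Or.inl (Or.inr (Or.inl ⟨i, rfl, rfl⟩)), by simp only [rem_inl0]; omega, rem_inl2 i⟩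

lemma gadj_at {i : Fin n} (h : m ≤ (i:ℕ)) : (Gm n m).Adj (inl (i,2)) (inl (i,1)) :=
  ⟨Or.inl (Or.inr (Or.inr (Or.inl ⟨i, rfl, rfl⟩))), rem_inl2 i, by simp only [rem_inl1]; omega⟩

lemma gadj_tb {i : Fin n} (h : m ≤ (i:ℕ)) : (Gm n m).Adj (inl (i,1)) (inl (i,3)) :=
  ⟨Or.inl (Or.inr (Or.inr (Or.inr (Or.inl ⟨i, rfl, rfl⟩)))), by simp only [rem_inl1]; omega,
    rem_inl3 i⟩

lemma gadj_bp1 (hm : m ≤ n) (i : Fin n) : (Gm n m).Adj (inl (i,3)) (inr 1) :=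
  ⟨Or.inl (Or.inr (Or.inr (Or.inr (Or.inr (Or.inl ⟨i, rfl, rfl⟩))))), rem_inl3 i,
    by simp only [rem_inr1]; omega⟩

lemma gadj_bp4 (hm : m ≤ n + 1) (i : Fin n) : (Gm n m).Adj (inl (i,3)) (inr 4) :=
  ⟨Or.inl (Or.inr (Or.inr (Or.inr (Or.inr (Or.inr (Or.inl ⟨i, rfl, rfl⟩)))))), rem_inl3 i,
    by simp only [rem_inr4]; omega⟩

lemma gadj_p01 (hm : m ≤ n) : (Gm n m).Adj (inr 0) (inr 1) :=
  ⟨Or.inl (Or.inr (Or.inr (Or.inr (Or.inr (Or.inr (Or.inr (Or.inl ⟨rfl, rfl⟩))))))), rem_inr0,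
    by simp only [rem_inr1]; omega⟩

lemma gadj_p12 (hm : m ≤ n) : (Gm n m).Adj (inr 1) (inr 2) :=
  ⟨Or.inl (Or.inr (Or.inr (Or.inr (Or.inr (Or.inr (Or.inr (Or.inr (Or.inl ⟨rfl, rfl⟩)))))))),
    by simp only [rem_inr1]; omega, by simp only [rem_inr2]; omega⟩

lemma gadj_p23 (hm : m ≤ n) : (Gm n m).Adj (inr 2) (inr 3) :=
  ⟨Or.inl (Or.inr (Or.inr (Or.inr (Or.inr (Or.inr (Or.inr (Or.inr (Or.inr
    (Or.inl ⟨rfl, rfl⟩))))))))),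
    by simp only [rem_inr2]; omega, by simp only [rem_inr3]; omega⟩

lemma gadj_p34 (hm : m ≤ n + 1) : (Gm n m).Adj (inr 3) (inr 4) :=
  ⟨Or.inl (Or.inr (Or.inr (Or.inr (Or.inr (Or.inr (Or.inr (Or.inr (Or.inr (Or.inr
    (Or.inl ⟨rfl, rfl⟩)))))))))),
    by simp only [rem_inr3]; omega, by simp only [rem_inr4]; omega⟩

lemma gadj_p45 (hm : m ≤ n + 1) : (Gm n m).Adj (inr 4) (inr 5) :=
  ⟨Or.inl (Or.inr (Or.inr (Or.inr (Or.inr (Or.inr (Or.inr (Or.inr (Or.inr (Or.inr (Or.inr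
    (Or.inl ⟨rfl, rfl⟩))))))))))),
    by simp only [rem_inr4]; omega, rem_inr5⟩

lemma gadj_p04 (hm : m ≤ n + 1) : (Gm n m).Adj (inr 0) (inr 4) :=
  ⟨Or.inl (Or.inr (Or.inr (Or.inr (Or.inr (Or.inr (Or.inr (Or.inr (Or.inr (Or.inr (Or.inr
    (Or.inr (Or.inl ⟨rfl, rfl⟩)))))))))))),
    rem_inr0, by simp only [rem_inr4]; omega⟩

lemma gadj_p15 (hm : m ≤ n) : (Gm n m).Adj (inr 1) (inr 5) :=
  ⟨Or.inl (Or.inr (Or.inr (Or.inr (Or.inr (Or.inr (Or.inr (Or.inr (Or.inr (Or.inr (Or.inr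
    (Or.inr (Or.inr ⟨rfl, rfl⟩)))))))))))),
    by simp only [rem_inr1]; omega, rem_inr5⟩

end adjacencies

lemma deg_dichot {n m : ℕ} (hm : m ≤ n) (x : V n) :
    deg (Gm n m) x = 0 ∨ 2 ≤ deg (Gm n m) x := by
  obtain ⟨i, j⟩ | j := x
  · fin_cases j
    · by_cases h : (i:ℕ) < m
      · exact Or.inl (deg_zero_of_rem ((rem_inl0 i).2 h))
      · exact Or.inr (two_le_deg (gadj_ut (by omega)) (gadj_ua (by omega)) (by simp))
    · by_cases h : (i:ℕ) < m
      · exact Or.inl (deg_zero_of_rem ((rem_inl1 i).2 h))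
      · exact Or.inr (two_le_deg (gadj_ut (by omega)).symm (gadj_at (by omega)).symm (by simp))
    · by_cases h : (i:ℕ) < m
      · exact Or.inl (deg_a_dead i h)
      · exact Or.inr (two_le_deg (gadj_ua (by omega)).symm (gadj_at (by omega)) (by simp))
    · exact Or.inr (two_le_deg (gadj_bp1 hm i) (gadj_bp4 (by omega) i) (by simp))
  · fin_cases j
    · exact Or.inr (two_le_deg (gadj_p01 hm) (gadj_p04 (by omega)) (by simp))
    · exact Or.inr (two_le_deg (gadj_p01 hm).symm (gadj_p12 hm) (by simp))
    · exact Or.inr (two_le_deg (gadj_p12 hm).symm (gadj_p23 hm) (by simp))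
    · exact Or.inr (two_le_deg (gadj_p23 hm).symm (gadj_p34 (by omega)) (by simp))
    · exact Or.inr (two_le_deg (gadj_p34 (by omega)).symm (gadj_p45 (by omega)) (by simp))
    · exact Or.inr (two_le_deg (gadj_p15 hm).symm (gadj_p45 (by omega)).symm (by simp))

lemma nbr_u {n m : ℕ} {i : Fin n} (h : m ≤ (i:ℕ)) :
    (Gm n m).neighborSet (inl (i,0)) = {inl (i,1), inl (i,2)} := by
  ext y
  simp only [mem_neighborSet, Set.mem_insert_iff, Set.mem_singleton_iff]
  constructor
  · rintro ⟨hadj|hadj, hx, hy⟩ <;>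
      rcases hadj with ⟨i',h1,h2⟩|⟨i',h1,h2⟩|⟨i',h1,h2⟩|⟨i',h1,h2⟩|⟨i',h1,h2⟩|⟨i',h1,h2⟩|
        ⟨h1,h2⟩|⟨h1,h2⟩|⟨h1,h2⟩|⟨h1,h2⟩|⟨h1,h2⟩|⟨h1,h2⟩|⟨h1,h2⟩ <;>
      simp_all [Prod.ext_iff]
  · rintro (rfl|rfl)
    · exact gadj_ut h
    · exact gadj_ua h

lemma deg_u {n m : ℕ} {i : Fin n} (h : m ≤ (i:ℕ)) : deg (Gm n m) (inl (i,0)) = 2 := by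
  rw [deg, nbr_u h]
  exact Set.ncard_pair (by simp)

lemma nbr_p2 (n : ℕ) : (Gm n n).neighborSet (inr 2) = {inr 1, inr 3} := by
  ext y
  simp only [mem_neighborSet, Set.mem_insert_iff, Set.mem_singleton_iff]
  constructor
  · rintro ⟨hadj|hadj, hx, hy⟩ <;>
      rcases hadj with ⟨i',h1,h2⟩|⟨i',h1,h2⟩|⟨i',h1,h2⟩|⟨i',h1,h2⟩|⟨i',h1,h2⟩|⟨i',h1,h2⟩|
        ⟨h1,h2⟩|⟨h1,h2⟩|⟨h1,h2⟩|⟨h1,h2⟩|⟨h1,h2⟩|⟨h1,h2⟩|⟨h1,h2⟩ <;>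
      simp_all [Prod.ext_iff]
  · rintro (rfl|rfl)
    · exact (gadj_p12 le_rfl).symm
    · exact gadj_p23 le_rfl

lemma deg_p2 (n : ℕ) : deg (Gm n n) (inr 2) = 2 := by
  rw [deg, nbr_p2]
  exact Set.ncard_pair (by simp)

lemma nbr_p3 (n : ℕ) : (Gm n (n+1)).neighborSet (inr 3) = {inr 4} := by
  ext y
  simp only [mem_neighborSet, Set.mem_singleton_iff]
  constructor
  · rintro ⟨hadj|hadj, hx, hy⟩ <;>
      rcases hadj with ⟨i',h1,h2⟩|⟨i',h1,h2⟩|⟨i',h1,h2⟩|⟨i',h1,h2⟩|⟨i',h1,h2⟩|⟨i',h1,h2⟩|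
        ⟨h1,h2⟩|⟨h1,h2⟩|⟨h1,h2⟩|⟨h1,h2⟩|⟨h1,h2⟩|⟨h1,h2⟩|⟨h1,h2⟩ <;>
      simp_all [Prod.ext_iff, rem_inr2]
  · rintro rfl
    exact gadj_p34 le_rfl

lemma deg_p3 (n : ℕ) : deg (Gm n (n+1)) (inr 3) = 1 := by
  rw [deg, nbr_p3]
  exact Set.ncard_singleton _

/-- The MinGreedy execution. -/
def exec (n : ℕ) : GreedyExec (V n) (Gm n 0) where
  k := n + 2
  Gs := Gm n
  sel := selF n
  oth := othF n
  init := rfl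
  adj := fun i hi => Gm_adj n i hi
  step := fun i _ => Gm_step n i
  final := Gm_final n

lemma exec_isMinGreedy (n : ℕ) : (exec n).IsMinGreedy := by
  intro i hi x hx
  rcases lt_or_ge i n with h | h
  · have hs : selF n i = inl (⟨i,h⟩,0) := by simp [selF, h]
    have hd : deg (Gm n i) (selF n i) = 2 := by
      rw [hs]; exact deg_u le_rfl
    show deg (Gm n i) (selF n i) ≤ deg (Gm n i) x
    rcases deg_dichot (le_of_lt h) x with h0 | h2
    · change 0 < deg (Gm n i) x at hx
      omega
    · omega
  · have hi2 : i = n ∨ i = n + 1 := by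
      change i < n + 2 at hi
      omega
    rcases hi2 with h1 | h1
    · rw [h1] at hx ⊢
      have hs : selF n n = inr 2 := by simp [selF]
      have hd : deg (Gm n n) (selF n n) = 2 := by rw [hs]; exact deg_p2 n
      show deg (Gm n n) (selF n n) ≤ deg (Gm n n) x
      rcases deg_dichot le_rfl x with h0 | h2
      · change 0 < deg (Gm n n) x at hx
        omega
      · omega
    · rw [h1] at hx ⊢
      have hs : selF n (n+1) = inr 3 := by
        simp [selF, show ¬ (n+1 < n) by omega]
      have hd : deg (Gm n (n+1)) (selF n (n+1)) = 1 := by rw [hs]; exact deg_p3 n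
      show deg (Gm n (n+1)) (selF n (n+1)) ≤ deg (Gm n (n+1)) x
      change 0 < deg (Gm n (n+1)) x at hx
      omega

lemma deg_le_of_subset {n : ℕ} {H : SimpleGraph (V n)} {x : V n} {s : Set (V n)}
    (h : H.neighborSet x ⊆ s) : deg H x ≤ s.ncard :=
  Set.ncard_le_ncard h (Set.toFinite _)

lemma ncard_range_le {n : ℕ} (f : Fin n → V n) : (Set.range f).ncard ≤ n := by
  rw [← Set.image_univ]
  refine le_trans (Set.ncard_image_le Set.finite_univ) ?_
  simp [Set.ncard_univ]

lemma maxdeg (n : ℕ) : maxDegLE (Gm n 0) (n + 3) := by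
  intro x
  obtain ⟨i, j⟩ | j := x
  · fin_cases j
    · refine le_trans (deg_le_of_subset (s := {inl (i,1), inl (i,2)}) ?_) ?_
      · exact (nbr_u (Nat.zero_le _)).subset
      · refine le_trans (Set.ncard_insert_le _ _) ?_
        simp [Set.ncard_singleton]
    · refine le_trans (deg_le_of_subset (s := {inl (i,0), inl (i,2), inl (i,3)}) ?_) ?_
      · intro y hy
        obtain ⟨hadj|hadj, hx, hy'⟩ := hy <;>
          rcases hadj with ⟨i',h1,h2⟩|⟨i',h1,h2⟩|⟨i',h1,h2⟩|⟨i',h1,h2⟩|⟨i',h1,h2⟩|⟨i',h1,h2⟩|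
            ⟨h1,h2⟩|⟨h1,h2⟩|⟨h1,h2⟩|⟨h1,h2⟩|⟨h1,h2⟩|⟨h1,h2⟩|⟨h1,h2⟩ <;>
          simp_all [Prod.ext_iff]
      · refine le_trans (Set.ncard_insert_le _ _) (le_trans (Nat.add_le_add_right
          (Set.ncard_insert_le _ _) 1) ?_)
        simp [Set.ncard_singleton]
    · refine le_trans (deg_le_of_subset (s := {inl (i,0), inl (i,1)}) ?_) ?_
      · intro y hy
        obtain ⟨hadj|hadj, hx, hy'⟩ := hy <;>
          rcases hadj with ⟨i',h1,h2⟩|⟨i',h1,h2⟩|⟨i',h1,h2⟩|⟨i',h1,h2⟩|⟨i',h1,h2⟩|⟨i',h1,h2⟩|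
            ⟨h1,h2⟩|⟨h1,h2⟩|⟨h1,h2⟩|⟨h1,h2⟩|⟨h1,h2⟩|⟨h1,h2⟩|⟨h1,h2⟩ <;>
          simp_all [Prod.ext_iff]
      · refine le_trans (Set.ncard_insert_le _ _) ?_
        simp [Set.ncard_singleton]
    · refine le_trans (deg_le_of_subset (s := {inl (i,1), inr 1, inr 4}) ?_) ?_
      · intro y hy
        obtain ⟨hadj|hadj, hx, hy'⟩ := hy <;>
          rcases hadj with ⟨i',h1,h2⟩|⟨i',h1,h2⟩|⟨i',h1,h2⟩|⟨i',h1,h2⟩|⟨i',h1,h2⟩|⟨i',h1,h2⟩|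
            ⟨h1,h2⟩|⟨h1,h2⟩|⟨h1,h2⟩|⟨h1,h2⟩|⟨h1,h2⟩|⟨h1,h2⟩|⟨h1,h2⟩ <;>
          simp_all [Prod.ext_iff]
      · refine le_trans (Set.ncard_insert_le _ _) (le_trans (Nat.add_le_add_right
          (Set.ncard_insert_le _ _) 1) ?_)
        simp [Set.ncard_singleton]
  · fin_cases j
    · refine le_trans (deg_le_of_subset (s := {inr 1, inr 4}) ?_) ?_
      · intro y hy
        obtain ⟨hadj|hadj, hx, hy'⟩ := hy <;>
          rcases hadj with ⟨i',h1,h2⟩|⟨i',h1,h2⟩|⟨i',h1,h2⟩|⟨i',h1,h2⟩|⟨i',h1,h2⟩|⟨i',h1,h2⟩|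
            ⟨h1,h2⟩|⟨h1,h2⟩|⟨h1,h2⟩|⟨h1,h2⟩|⟨h1,h2⟩|⟨h1,h2⟩|⟨h1,h2⟩ <;>
          simp_all [Prod.ext_iff]
      · refine le_trans (Set.ncard_insert_le _ _) ?_
        simp [Set.ncard_singleton]
    · refine le_trans (deg_le_of_subset
        (s := insert (inr 0) (insert (inr 2) (insert (inr 5)
          (Set.range fun i : Fin n => (inl (i,3) : V n))))) ?_) ?_
      · intro y hy
        obtain ⟨hadj|hadj, hx, hy'⟩ := hy <;>
          rcases hadj with ⟨i',h1,h2⟩|⟨i',h1,h2⟩|⟨i',h1,h2⟩|⟨i',h1,h2⟩|⟨i',h1,h2⟩|⟨i',h1,h2⟩|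
            ⟨h1,h2⟩|⟨h1,h2⟩|⟨h1,h2⟩|⟨h1,h2⟩|⟨h1,h2⟩|⟨h1,h2⟩|⟨h1,h2⟩ <;>
          simp_all [Prod.ext_iff]
      · refine le_trans (Set.ncard_insert_le _ _) (le_trans (Nat.add_le_add_right
          (Set.ncard_insert_le _ _) 1) (le_trans (Nat.add_le_add_right
          (Nat.add_le_add_right (Set.ncard_insert_le _ _) 1) 1) ?_))
        have := ncard_range_le (fun i : Fin n => (inl (i,3) : V n))
        omega
    · refine le_trans (deg_le_of_subset (s := {inr 1, inr 3}) ?_) ?_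
      · intro y hy
        obtain ⟨hadj|hadj, hx, hy'⟩ := hy <;>
          rcases hadj with ⟨i',h1,h2⟩|⟨i',h1,h2⟩|⟨i',h1,h2⟩|⟨i',h1,h2⟩|⟨i',h1,h2⟩|⟨i',h1,h2⟩|
            ⟨h1,h2⟩|⟨h1,h2⟩|⟨h1,h2⟩|⟨h1,h2⟩|⟨h1,h2⟩|⟨h1,h2⟩|⟨h1,h2⟩ <;>
          simp_all [Prod.ext_iff]
      · refine le_trans (Set.ncard_insert_le _ _) ?_
        simp [Set.ncard_singleton]
    · refine le_trans (deg_le_of_subset (s := {inr 2, inr 4}) ?_) ?_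
      · intro y hy
        obtain ⟨hadj|hadj, hx, hy'⟩ := hy <;>
          rcases hadj with ⟨i',h1,h2⟩|⟨i',h1,h2⟩|⟨i',h1,h2⟩|⟨i',h1,h2⟩|⟨i',h1,h2⟩|⟨i',h1,h2⟩|
            ⟨h1,h2⟩|⟨h1,h2⟩|⟨h1,h2⟩|⟨h1,h2⟩|⟨h1,h2⟩|⟨h1,h2⟩|⟨h1,h2⟩ <;>
          simp_all [Prod.ext_iff]
      · refine le_trans (Set.ncard_insert_le _ _) ?_
        simp [Set.ncard_singleton]
    · refine le_trans (deg_le_of_subset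
        (s := insert (inr 3) (insert (inr 5) (insert (inr 0)
          (Set.range fun i : Fin n => (inl (i,3) : V n))))) ?_) ?_
      · intro y hy
        obtain ⟨hadj|hadj, hx, hy'⟩ := hy <;>
          rcases hadj with ⟨i',h1,h2⟩|⟨i',h1,h2⟩|⟨i',h1,h2⟩|⟨i',h1,h2⟩|⟨i',h1,h2⟩|⟨i',h1,h2⟩|
            ⟨h1,h2⟩|⟨h1,h2⟩|⟨h1,h2⟩|⟨h1,h2⟩|⟨h1,h2⟩|⟨h1,h2⟩|⟨h1,h2⟩ <;>
          simp_all [Prod.ext_iff]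
      · refine le_trans (Set.ncard_insert_le _ _) (le_trans (Nat.add_le_add_right
          (Set.ncard_insert_le _ _) 1) (le_trans (Nat.add_le_add_right
          (Nat.add_le_add_right (Set.ncard_insert_le _ _) 1) 1) ?_))
        have := ncard_range_le (fun i : Fin n => (inl (i,3) : V n))
        omega
    · refine le_trans (deg_le_of_subset (s := {inr 1, inr 4}) ?_) ?_
      · intro y hy
        obtain ⟨hadj|hadj, hx, hy'⟩ := hy <;>
          rcases hadj with ⟨i',h1,h2⟩|⟨i',h1,h2⟩|⟨i',h1,h2⟩|⟨i',h1,h2⟩|⟨i',h1,h2⟩|⟨i',h1,h2⟩|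
            ⟨h1,h2⟩|⟨h1,h2⟩|⟨h1,h2⟩|⟨h1,h2⟩|⟨h1,h2⟩|⟨h1,h2⟩|⟨h1,h2⟩ <;>
          simp_all [Prod.ext_iff]
      · refine le_trans (Set.ncard_insert_le _ _) ?_
        simp [Set.ncard_singleton]

lemma selF_lt_cases {n i : ℕ} (hi : i < n + 2) :
    (∃ h : i < n, selF n i = inl (⟨i,h⟩,0) ∧ othF n i = inl (⟨i,h⟩,1)) ∨
    (i = n ∧ selF n i = inr 2 ∧ othF n i = inr 1) ∨
    (i = n + 1 ∧ selF n i = inr 3 ∧ othF n i = inr 4) := by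
  by_cases h : i < n
  · exact Or.inl ⟨h, by simp [selF, h], by simp [othF, h]⟩
  · by_cases h2 : i = n
    · subst h2
      exact Or.inr (Or.inl ⟨rfl, by simp [selF], by simp [othF]⟩)
    · have h3 : i = n + 1 := by omega
      subst h3
      exact Or.inr (Or.inr ⟨rfl, by simp [selF, show ¬ (n+1<n) by omega],
        by simp [othF, show ¬ (n+1<n) by omega]⟩)

lemma M_eq (n : ℕ) :
    (exec n).M = (fun i => s(selF n i, othF n i)) '' (Set.Iio (n+2)) := by
  ext e
  simp only [GreedyExec.M, Set.mem_setOf_eq, Set.mem_image, Set.mem_Iio]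
  constructor
  · rintro ⟨i, hi, rfl⟩
    exact ⟨i, hi, rfl⟩
  · rintro ⟨i, hi, rfl⟩
    exact ⟨i, hi, rfl⟩

lemma M_ncard (n : ℕ) : ((exec n).M).ncard = n + 2 := by
  rw [M_eq]
  rw [Set.ncard_image_of_injOn]
  · rw [← Finset.coe_range, Set.ncard_coe_finset, Finset.card_range]
  · intro i hi j hj hij
    simp only [Set.mem_Iio] at hi hj
    rcases selF_lt_cases hi with ⟨h1, hs1, ho1⟩ | ⟨h1, hs1, ho1⟩ | ⟨h1, hs1, ho1⟩ <;>
      rcases selF_lt_cases hj with ⟨h2, hs2, ho2⟩ | ⟨h2, hs2, ho2⟩ | ⟨h2, hs2, ho2⟩ <;>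
      simp only [hs1, ho1, hs2, ho2, Sym2.eq_iff] at hij <;>
      simp_all [Prod.ext_iff] <;> omega

/-- The optimal matching, indexed by `Fin n ⊕ Fin n ⊕ Fin 3`. -/
def optF (n : ℕ) : (Fin n ⊕ Fin n ⊕ Fin 3) → Sym2 (V n)
  | inl i => s(inl (i,0), inl (i,2))
  | inr (inl i) => s(inl (i,1), inl (i,3))
  | inr (inr 0) => s((inr 0 : V n), inr 1)
  | inr (inr 1) => s((inr 2 : V n), inr 3)
  | inr (inr 2) => s((inr 4 : V n), inr 5)

def NN (n : ℕ) : Set (Sym2 (V n)) := Set.range (optF n)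

lemma opt_disj {n : ℕ} {w1 w2 : Fin n ⊕ Fin n ⊕ Fin 3} (hne : w1 ≠ w2) :
    ∀ x, x ∈ optF n w1 → x ∉ optF n w2 := by
  intro x h1 h2
  rcases w1 with i1|i1|j1 <;> rcases w2 with i2|i2|j2 <;>
    (try fin_cases j1) <;> (try fin_cases j2) <;>
    simp only [optF, Sym2.mem_iff] at h1 h2 <;>
    rcases h1 with rfl|rfl <;> rcases h2 with h2|h2 <;>
    simp_all [Prod.ext_iff]

lemma optF_inj (n : ℕ) : Function.Injective (optF n) := by
  intro w1 w2 h
  by_contra hne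
  have hx : (optF n w1).out.1 ∈ optF n w1 := Sym2.out_fst_mem _
  exact opt_disj hne _ hx (h ▸ hx)

lemma NN_matching (n : ℕ) : IsMatchingSet (Gm n 0) (NN n) := by
  constructor
  · rintro e ⟨w, rfl⟩
    rcases w with i|i|j
    · exact (mem_edgeSet _).2 (gadj_ua (Nat.zero_le _))
    · exact (mem_edgeSet _).2 (gadj_tb (Nat.zero_le _))
    · fin_cases j
      · exact (mem_edgeSet _).2 (gadj_p01 (Nat.zero_le _))
      · exact (mem_edgeSet _).2 (gadj_p23 (Nat.zero_le _))
      · exact (mem_edgeSet _).2 (gadj_p45 (Nat.zero_le _))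
  · rintro e ⟨w1, rfl⟩ f ⟨w2, rfl⟩ hne x hx
    have hw : w1 ≠ w2 := by rintro rfl; exact hne rfl
    exact opt_disj hw x hx

lemma NN_ncard (n : ℕ) : (NN n).ncard = 2 * n + 3 := by
  rw [NN, ← Set.image_univ, Set.ncard_image_of_injective _ (optF_inj n), Set.ncard_univ]
  simp [Nat.card_sum]
  omega

lemma nu_ge (n : ℕ) : 2 * n + 3 ≤ nu (Gm n 0) := by
  have hmem : 2 * n + 3 ∈ {c | ∃ M : Set (Sym2 (V n)), IsMatchingSet (Gm n 0) M ∧ M.ncard = c} :=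
    ⟨NN n, NN_matching n, NN_ncard n⟩
  refine le_csSup ⟨Nat.card (Sym2 (V n)), ?_⟩ hmem
  rintro c ⟨M, -, rfl⟩
  rw [← Set.ncard_univ]
  exact Set.ncard_le_ncard (Set.subset_univ _) Set.finite_univ

end Tight

/-- the (Δ−1)/(2Δ−3) guarantee for MinGreedy is tight: there is a graph of
maximum degree at most Δ and a MinGreedy execution producing a matching of size Δ−1,
while the graph has a matching of size 2Δ−3. -/
theorem minGreedy_tight (Δ : ℕ) (hΔ : 3 ≤ Δ) :
    ∃ (V : Type) (_ : Fintype V) (G : SimpleGraph V) (E : GreedyExec V G),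
      maxDegLE G Δ ∧ E.IsMinGreedy ∧
      (E.M).ncard = Δ - 1 ∧
      (∃ N : Set (Sym2 V), IsMatchingSet G N ∧ N.ncard = 2 * Δ - 3) ∧
      ((E.M).ncard : ℝ) ≤ (((Δ : ℝ) - 1) / (2 * (Δ : ℝ) - 3)) * (nu G : ℝ) := by
  set n := Δ - 3 with hn
  have hM : ((Tight.exec n).M).ncard = Δ - 1 := by
    rw [Tight.M_ncard]
    omega
  have hNN : (Tight.NN n).ncard = 2 * Δ - 3 := by
    rw [Tight.NN_ncard]
    omega
  have hnu : 2 * Δ - 3 ≤ nu (Tight.Gm n 0) := by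
    have := Tight.nu_ge n
    omega
  refine ⟨Tight.V n, inferInstance, Tight.Gm n 0, Tight.exec n, ?_, Tight.exec_isMinGreedy n,
    hM, ⟨Tight.NN n, Tight.NN_matching n, hNN⟩, ?_⟩
  · have h3 : n + 3 = Δ := by omega
    exact h3 ▸ Tight.maxdeg n
  · have hΔR : (3 : ℝ) ≤ (Δ : ℝ) := by exact_mod_cast hΔ
    have hpos : (0 : ℝ) < 2 * (Δ : ℝ) - 3 := by linarith
    have h1 : (((Tight.exec n).M).ncard : ℝ) = (Δ : ℝ) - 1 := by
      rw [hM, Nat.cast_sub (by omega)]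
      norm_num
    have h2 : (2 * (Δ : ℝ) - 3) ≤ (nu (Tight.Gm n 0) : ℝ) := by
      calc (2 * (Δ : ℝ) - 3) = ((2 * Δ - 3 : ℕ) : ℝ) := by
            rw [Nat.cast_sub (by omega)]
            push_cast
            ring
        _ ≤ _ := by exact_mod_cast hnu
    rw [h1]
    calc (Δ : ℝ) - 1 = (((Δ : ℝ) - 1) / (2 * (Δ : ℝ) - 3)) * (2 * (Δ : ℝ) - 3) := by
          rw [div_mul_cancel₀ _ hpos.ne']
      _ ≤ (((Δ : ℝ) - 1) / (2 * (Δ : ℝ) - 3)) * (nu (Tight.Gm n 0) : ℝ) := by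
          refine mul_le_mul_of_nonneg_left h2 (div_nonneg (by linarith) (by linarith))

end

end MinGreedy
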